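/- Let G be a finite group generated by a conjugacy class D of involutions such that for any two elements d, e ∈ D the order of the product d·e is 1, 2 or 3 (i.e., D is a class of 3-transpositions). Then every element d ∈ D is a 2-radical element of G: for all x, y ∈ G, the subgroup generated by the commutators ⁅d,x⁆ and ⁅d,y⁆ is solvable. -/

import Mathlib

open Subgroup

open scoped commutatorElement

/-- Elements of a closure of pairwise commuting set commute. -/
private lemma comm_of_closure {K : Type*} [Group K] {S : Set K}
    (h : ∀ a ∈ S, ∀ b ∈ S, a * b = b * a) :
    ∀ a ∈ Subgroup.closure S, ∀ b ∈ Subgroup.closure S, a * b = b * a := by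
  intro a ha b hb
  refine Subgroup.closure_induction₂ (p := fun x y _ _ => x * y = y * x)
    (fun x y hx hy => h x hx y hy)
    (fun x _ => by show (1 : K) * x = x * 1; rw [one_mul, mul_one])
    (fun x _ => by show x * (1 : K) = 1 * x; rw [one_mul, mul_one])
    (fun x y z _ _ _ hxz hyz => by
      show (x * y) * z = z * (x * y)
      have hxz' : x * z = z * x := hxz
      have hyz' : y * z = z * y := hyz
      rw [mul_assoc, hyz', ← mul_assoc, hxz', mul_assoc])
    (fun y z x _ _ _ hxy hxz => by
      show x * (y * z) = (y * z) * x
      have hxy' : x * y = y * x := hxy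
      have hxz' : x * z = z * x := hxz
      rw [← mul_assoc, hxy', mul_assoc, hxz', ← mul_assoc])
    (fun x y _ _ hxy => ?_) (fun x y _ _ hxy => ?_) ha hb
  · show x⁻¹ * y = y * x⁻¹
    exact (Commute.inv_left (hxy : Commute x y) : _)
  · show x * y⁻¹ = y⁻¹ * x
    exact (Commute.inv_right (hxy : Commute x y) : _)

/-- Lift membership in a pair-closure from the ambient group into a subgroup. -/
private lemma mem_closure_pair_lift {G : Type*} [Group G] {H : Subgroup G} (a b x : H)
    (h : (x : G) ∈ Subgroup.closure ({(a : G), (b : G)} : Set G)) :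
    x ∈ Subgroup.closure ({a, b} : Set H) := by
  have hsub : Subgroup.closure ({(a : G), (b : G)} : Set G) ≤ H := by
    rw [Subgroup.closure_le]
    rintro z (rfl | hz)
    · exact a.2
    · rw [Set.mem_singleton_iff] at hz; subst hz; exact b.2
  have main : ∀ g (hg : g ∈ Subgroup.closure ({(a : G), (b : G)} : Set G)),
      (⟨g, hsub hg⟩ : H) ∈ Subgroup.closure ({a, b} : Set H) := by
    intro g hg
    induction hg using Subgroup.closure_induction with
    | mem z hz =>
      rcases hz with rfl | hz
      · exact subset_closure (by left; exact Subtype.ext rfl)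
      · rw [Set.mem_singleton_iff] at hz
        subst hz
        exact subset_closure (by right; exact Set.mem_singleton_of_eq (Subtype.ext rfl))
    | one => exact (by rw [show (⟨1, _⟩ : H) = 1 from Subtype.ext rfl]; exact one_mem _)
    | mul z w hz hw pz pw =>
      exact (by rw [show (⟨z * w, _⟩ : H) = ⟨z, hsub hz⟩ * ⟨w, hsub hw⟩ from Subtype.ext rfl]
                exact mul_mem pz pw)
    | inv z hz pz =>
      exact (by rw [show (⟨z⁻¹, _⟩ : H) = (⟨z, hsub hz⟩ : H)⁻¹ from Subtype.ext rfl]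
                exact inv_mem pz)
  have := main x h
  rwa [show (⟨(x : G), hsub h⟩ : H) = x from Subtype.ext rfl] at this

/-- Main abstract helper: if `⟨u,v⟩` has elements `t₁ t₂` which commute, whose
pair-closure is normalized by `u, v` and contains `⁅u,v⁆`, then `⟨u,v⟩` is solvable. -/
private lemma solvable_helper {G : Type*} [Group G] (u v t₁ t₂ : G)
    (ht₁ : t₁ ∈ Subgroup.closure ({u, v} : Set G))
    (ht₂ : t₂ ∈ Subgroup.closure ({u, v} : Set G))
    (hc : t₁ * t₂ = t₂ * t₁)
    (h1 : u * t₁ * u⁻¹ ∈ Subgroup.closure ({t₁, t₂} : Set G))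
    (h2 : u * t₂ * u⁻¹ ∈ Subgroup.closure ({t₁, t₂} : Set G))
    (h3 : u⁻¹ * t₁ * u ∈ Subgroup.closure ({t₁, t₂} : Set G))
    (h4 : u⁻¹ * t₂ * u ∈ Subgroup.closure ({t₁, t₂} : Set G))
    (h5 : v * t₁ * v⁻¹ ∈ Subgroup.closure ({t₁, t₂} : Set G))
    (h6 : v * t₂ * v⁻¹ ∈ Subgroup.closure ({t₁, t₂} : Set G))
    (h7 : v⁻¹ * t₁ * v ∈ Subgroup.closure ({t₁, t₂} : Set G))
    (h8 : v⁻¹ * t₂ * v ∈ Subgroup.closure ({t₁, t₂} : Set G))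
    (hcm : u * v * u⁻¹ * v⁻¹ ∈ Subgroup.closure ({t₁, t₂} : Set G)) :
    IsSolvable ↥(Subgroup.closure ({u, v} : Set G)) := by
  set H := Subgroup.closure ({u, v} : Set G) with hH
  have hu : u ∈ H := subset_closure (by left; rfl)
  have hv : v ∈ H := subset_closure (by right; rfl)
  set uK : H := ⟨u, hu⟩
  set vK : H := ⟨v, hv⟩
  set s₁ : H := ⟨t₁, ht₁⟩
  set s₂ : H := ⟨t₂, ht₂⟩
  -- generators of H
  have hgenK : Subgroup.closure ({uK, vK} : Set H) = ⊤ := by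
    have hpre : ((↑) : H → G) ⁻¹' ({u, v} : Set G) = ({uK, vK} : Set H) := by
      ext z
      simp only [Set.mem_preimage, Set.mem_insert_iff, Set.mem_singleton_iff]
      constructor
      · rintro (hz | hz)
        · left; exact Subtype.ext hz
        · right; exact Subtype.ext hz
      · rintro (rfl | rfl)
        · left; rfl
        · right; rfl
    rw [← hpre]
    exact Subgroup.closure_closure_coe_preimage
  set T : Subgroup H := Subgroup.closure ({s₁, s₂} : Set H) with hT
  have lift : ∀ x : H, (x : G) ∈ Subgroup.closure ({t₁, t₂} : Set G) → x ∈ T :=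
    fun x hx => mem_closure_pair_lift s₁ s₂ x hx
  -- conjugation stability
  have conj_mem : ∀ g : H, (g * s₁ * g⁻¹ ∈ T) → (g * s₂ * g⁻¹ ∈ T) →
      ∀ h ∈ T, g * h * g⁻¹ ∈ T := by
    intro g hg1 hg2 h hh
    induction hh using Subgroup.closure_induction with
    | mem z hz =>
      rcases hz with rfl | hz
      · exact hg1
      · rw [Set.mem_singleton_iff] at hz; subst hz; exact hg2
    | one => rw [mul_one, mul_inv_cancel]; exact one_mem _
    | mul z w hz hw pz pw =>
      have : g * (z * w) * g⁻¹ = (g * z * g⁻¹) * (g * w * g⁻¹) := by group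
      rw [this]; exact mul_mem pz pw
    | inv z hz pz =>
      have : g * z⁻¹ * g⁻¹ = (g * z * g⁻¹)⁻¹ := by group
      rw [this]; exact inv_mem pz
  have huKT1 : uK * s₁ * uK⁻¹ ∈ T := lift _ h1
  have huKT2 : uK * s₂ * uK⁻¹ ∈ T := lift _ h2
  have huKT3 : uK⁻¹ * s₁ * uK ∈ T := lift _ h3
  have huKT4 : uK⁻¹ * s₂ * uK ∈ T := lift _ h4
  have hvKT1 : vK * s₁ * vK⁻¹ ∈ T := lift _ h5
  have hvKT2 : vK * s₂ * vK⁻¹ ∈ T := lift _ h6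
  have hvKT3 : vK⁻¹ * s₁ * vK ∈ T := lift _ h7
  have hvKT4 : vK⁻¹ * s₂ * vK ∈ T := lift _ h8
  have norm_mem : ∀ g : H, (g * s₁ * g⁻¹ ∈ T) → (g * s₂ * g⁻¹ ∈ T) →
      (g⁻¹ * s₁ * g ∈ T) → (g⁻¹ * s₂ * g ∈ T) → g ∈ Subgroup.normalizer (T : Set H) := by
    intro g a1 a2 a3 a4
    rw [Subgroup.mem_normalizer_iff]
    intro h
    constructor
    · intro hh; exact conj_mem g a1 a2 h hh
    · intro hh
      have b1 : g⁻¹ * s₁ * g⁻¹⁻¹ ∈ T := by rwa [inv_inv]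
      have b2 : g⁻¹ * s₂ * g⁻¹⁻¹ ∈ T := by rwa [inv_inv]
      have := conj_mem g⁻¹ b1 b2 _ hh
      rwa [show g⁻¹ * (g * h * g⁻¹) * g⁻¹⁻¹ = h by group] at this
  have hTnormal : T.Normal := by
    rw [← Subgroup.normalizer_eq_top_iff]
    rw [eq_top_iff, ← hgenK, Subgroup.closure_le]
    rintro z (rfl | hz)
    · exact norm_mem uK huKT1 huKT2 huKT3 huKT4
    · rw [Set.mem_singleton_iff] at hz; subst hz
      exact norm_mem vK hvKT1 hvKT2 hvKT3 hvKT4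
  haveI := hTnormal
  -- T is commutative, hence solvable
  have hTcomm : ∀ a ∈ T, ∀ b ∈ T, a * b = b * a := by
    apply comm_of_closure
    intro a ha b hb
    simp only [Set.mem_insert_iff, Set.mem_singleton_iff] at ha hb
    rcases ha with rfl | rfl <;> rcases hb with rfl | rfl
    · rfl
    · exact Subtype.ext hc
    · exact (Subtype.ext hc).symm
    · rfl
  haveI hTsolv : IsSolvable ↥T :=
    isSolvable_of_comm (fun a b => Subtype.ext (hTcomm a a.2 b b.2))
  -- the quotient is commutative, hence solvable
  have hT' : ⁅uK, vK⁆ ∈ T := by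
    apply lift
    show ((uK * vK * uK⁻¹ * vK⁻¹ : H) : G) ∈ _
    exact hcm
  have hcq : Commute ((QuotientGroup.mk' T) uK) ((QuotientGroup.mk' T) vK) := by
    rw [← commutatorElement_eq_one_iff_commute, ← map_commutatorElement]
    exact (QuotientGroup.eq_one_iff _).mpr hT'
  have hgenQ : Subgroup.closure
      ({(QuotientGroup.mk' T) uK, (QuotientGroup.mk' T) vK} : Set (H ⧸ T)) = ⊤ := by
    have : ((QuotientGroup.mk' T) '' ({uK, vK} : Set H)) =
        ({(QuotientGroup.mk' T) uK, (QuotientGroup.mk' T) vK} : Set (H ⧸ T)) := by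
      rw [Set.image_insert_eq, Set.image_singleton]
    rw [← this, ← MonoidHom.map_closure, hgenK]
    exact Subgroup.map_top_of_surjective _ (QuotientGroup.mk'_surjective T)
  haveI hQsolv : IsSolvable (H ⧸ T) := by
    apply isSolvable_of_comm
    intro a b
    have ha : a ∈ Subgroup.closure
        ({(QuotientGroup.mk' T) uK, (QuotientGroup.mk' T) vK} : Set (H ⧸ T)) := by
      rw [hgenQ]; exact Subgroup.mem_top a
    have hb : b ∈ Subgroup.closure
        ({(QuotientGroup.mk' T) uK, (QuotientGroup.mk' T) vK} : Set (H ⧸ T)) := by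
      rw [hgenQ]; exact Subgroup.mem_top b
    refine comm_of_closure ?_ a ha b hb
    intro z hz w hw
    simp only [Set.mem_insert_iff, Set.mem_singleton_iff] at hz hw
    rcases hz with rfl | rfl <;> rcases hw with rfl | rfl
    · rfl
    · exact hcq
    · exact hcq.symm
    · rfl
  exact solvable_of_ker_le_range T.subtype (QuotientGroup.mk' T)
    (le_of_eq (by rw [QuotientGroup.ker_mk', Subgroup.range_subtype])) (hG' := hTsolv) (hG'' := hQsolv)

section Cases

variable {G : Type*} [Group G]

private lemma case222 (u v : G) (hu : u ^ 2 = 1) (hv : v ^ 2 = 1) (hw : (u * v) ^ 2 = 1) :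
    IsSolvable ↥(Subgroup.closure ({u, v} : Set G)) := by
  rw [pow_two] at hu hv hw
  have hui : u⁻¹ = u := inv_eq_of_mul_eq_one_right hu
  have hvi : v⁻¹ = v := inv_eq_of_mul_eq_one_right hv
  have mu : u ∈ Subgroup.closure ({u, v} : Set G) := subset_closure (by left; rfl)
  have mv : v ∈ Subgroup.closure ({u, v} : Set G) := subset_closure (by right; rfl)
  have hc : u * v = v * u := by
    calc u * v = (u * v)⁻¹ := (inv_eq_of_mul_eq_one_right hw).symm
      _ = v⁻¹ * u⁻¹ := mul_inv_rev u v
      _ = v * u := by rw [hui, hvi]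
  refine solvable_helper u v u v mu mv hc ?_ ?_ ?_ ?_ ?_ ?_ ?_ ?_ ?_
  · rw [show u * u * u⁻¹ = u from by group]; exact subset_closure (by left; rfl)
  · rw [show u * v * u⁻¹ = v from by rw [hc]; group]; exact subset_closure (by right; rfl)
  · rw [show u⁻¹ * u * u = u from by group]; exact subset_closure (by left; rfl)
  · rw [hui, hc, mul_assoc, hu, mul_one]; exact subset_closure (by right; rfl)
  · rw [← hc, mul_inv_cancel_right]; exact subset_closure (by left; rfl)
  · rw [show v * v * v⁻¹ = v from by group]; exact subset_closure (by right; rfl)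
  · rw [hvi, ← hc, mul_assoc, hv, mul_one]; exact subset_closure (by left; rfl)
  · rw [show v⁻¹ * v * v = v from by group]; exact subset_closure (by right; rfl)
  · rw [show u * v * u⁻¹ * v⁻¹ = 1 from by rw [hc]; group]; exact one_mem _

private lemma case223 (u v : G) (hu : u ^ 2 = 1) (hv : v ^ 2 = 1) (hw : (u * v) ^ 3 = 1) :
    IsSolvable ↥(Subgroup.closure ({u, v} : Set G)) := by
  rw [pow_two] at hu hv
  have hui : u⁻¹ = u := inv_eq_of_mul_eq_one_right hu
  have hvi : v⁻¹ = v := inv_eq_of_mul_eq_one_right hv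
  have mu : u ∈ Subgroup.closure ({u, v} : Set G) := subset_closure (by left; rfl)
  have mv : v ∈ Subgroup.closure ({u, v} : Set G) := subset_closure (by right; rfl)
  have mw : u * v ∈ Subgroup.closure ({u, v} : Set G) := mul_mem mu mv
  have mt : u * v ∈ Subgroup.closure ({u * v, u * v} : Set G) := subset_closure (by left; rfl)
  have hvu : v * u = (u * v)⁻¹ := by rw [mul_inv_rev, hui, hvi]
  refine solvable_helper u v (u * v) (u * v) mw mw rfl ?_ ?_ ?_ ?_ ?_ ?_ ?_ ?_ ?_
  · rw [show u * (u * v) * u⁻¹ = (u * u) * (v * u⁻¹) from by group, hu, one_mul, hui, hvu]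
    exact inv_mem mt
  · rw [show u * (u * v) * u⁻¹ = (u * u) * (v * u⁻¹) from by group, hu, one_mul, hui, hvu]
    exact inv_mem mt
  · rw [show u⁻¹ * (u * v) * u = v * u from by group, hvu]; exact inv_mem mt
  · rw [show u⁻¹ * (u * v) * u = v * u from by group, hvu]; exact inv_mem mt
  · rw [show v * (u * v) * v⁻¹ = v * u from by group, hvu]; exact inv_mem mt
  · rw [show v * (u * v) * v⁻¹ = v * u from by group, hvu]; exact inv_mem mt
  · rw [hvi, show v * (u * v) * v = v * u * (v * v) from by group, hv, mul_one, hvu]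
    exact inv_mem mt
  · rw [hvi, show v * (u * v) * v = v * u * (v * v) from by group, hv, mul_one, hvu]
    exact inv_mem mt
  · rw [hui, hvi, show u * v * u * v = (u * v) * (u * v) from by group]
    exact mul_mem mt mt

private lemma case232 (u v : G) (hu : u ^ 2 = 1) (hv : v ^ 3 = 1) (hw : (u * v) ^ 2 = 1) :
    IsSolvable ↥(Subgroup.closure ({u, v} : Set G)) := by
  rw [pow_two] at hu
  rw [pow_two] at hw
  have hui : u⁻¹ = u := inv_eq_of_mul_eq_one_right hu
  have mu : u ∈ Subgroup.closure ({u, v} : Set G) := subset_closure (by left; rfl)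
  have mv : v ∈ Subgroup.closure ({u, v} : Set G) := subset_closure (by right; rfl)
  have mt : v ∈ Subgroup.closure ({v, v} : Set G) := subset_closure (by left; rfl)
  have huvu : u * v * u = v⁻¹ := by
    apply eq_inv_of_mul_eq_one_left
    rw [show (u * v * u) * v = (u * v) * (u * v) from by group]; exact hw
  refine solvable_helper u v v v mv mv rfl ?_ ?_ ?_ ?_ ?_ ?_ ?_ ?_ ?_
  · rw [hui, huvu]; exact inv_mem mt
  · rw [hui, huvu]; exact inv_mem mt
  · rw [hui, huvu]; exact inv_mem mt
  · rw [hui, huvu]; exact inv_mem mt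
  · rw [show v * v * v⁻¹ = v from by group]; exact mt
  · rw [show v * v * v⁻¹ = v from by group]; exact mt
  · rw [show v⁻¹ * v * v = v from by group]; exact mt
  · rw [show v⁻¹ * v * v = v from by group]; exact mt
  · rw [hui, show u * v * u * v⁻¹ = (u * v * u) * v⁻¹ from by group, huvu]
    exact mul_mem (inv_mem mt) (inv_mem mt)

private lemma case233 (u v : G) (hu : u ^ 2 = 1) (hv : v ^ 3 = 1) (hw : (u * v) ^ 3 = 1) :
    IsSolvable ↥(Subgroup.closure ({u, v} : Set G)) := by
  rw [pow_two] at hu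
  rw [show v ^ 3 = v * v * v from by rw [pow_succ, pow_two]] at hv
  rw [show (u * v) ^ 3 = (u * v) * (u * v) * (u * v) from by rw [pow_succ, pow_two],
    show (u * v) * (u * v) * (u * v) = (u * v * u) * (v * u * v) from by group] at hw
  have hui : u⁻¹ = u := inv_eq_of_mul_eq_one_right hu
  have hv2 : v * v = v⁻¹ := eq_inv_of_mul_eq_one_left hv
  have hv2' : v⁻¹ * v⁻¹ = v := by
    rw [← mul_inv_rev]; exact inv_eq_of_mul_eq_one_right hv
  have mu : u ∈ Subgroup.closure ({u, v} : Set G) := subset_closure (by left; rfl)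
  have mv : v ∈ Subgroup.closure ({u, v} : Set G) := subset_closure (by right; rfl)
  have mT2 : v * u * v⁻¹ ∈ Subgroup.closure ({u, v} : Set G) :=
    mul_mem (mul_mem mv mu) (inv_mem mv)
  have mt1 : u ∈ Subgroup.closure ({u, v * u * v⁻¹} : Set G) := subset_closure (by left; rfl)
  have mt2 : v * u * v⁻¹ ∈ Subgroup.closure ({u, v * u * v⁻¹} : Set G) :=
    subset_closure (by right; rfl)
  have hA : u * v * u = (v * u * v)⁻¹ := eq_inv_of_mul_eq_one_left hw
  have hB : v * u * v = (u * v * u)⁻¹ := eq_inv_of_mul_eq_one_right hw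
  have hC : u * v⁻¹ * u = v * u * v := by
    refine Eq.symm ?_
    calc v * u * v = (u * v * u)⁻¹ := hB
      _ = u⁻¹ * v⁻¹ * u⁻¹ := by group
      _ = u * v⁻¹ * u := by rw [hui]
  have ht12 : u * (v * u * v⁻¹) = v⁻¹ * u * v := by
    calc u * (v * u * v⁻¹) = (u * v * u) * v⁻¹ := by group
      _ = (v * u * v)⁻¹ * v⁻¹ := by rw [hA]
      _ = v⁻¹ * u⁻¹ * (v⁻¹ * v⁻¹) := by group
      _ = v⁻¹ * u * v := by rw [hui, hv2']
  have ht21 : (v * u * v⁻¹) * u = v⁻¹ * u * v := by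
    calc (v * u * v⁻¹) * u = v * (u * v⁻¹ * u) := by group
      _ = v * (v * u * v) := by rw [hC]
      _ = (v * v) * (u * v) := by group
      _ = v⁻¹ * (u * v) := by rw [hv2]
      _ = v⁻¹ * u * v := by group
  refine solvable_helper u v u (v * u * v⁻¹) mu mT2 (ht12.trans ht21.symm) ?_ ?_ ?_ ?_ ?_ ?_ ?_ ?_ ?_
  · rw [show u * u * u⁻¹ = u from by group]; exact mt1
  · exact mul_mem (mul_mem mt1 mt2) (inv_mem mt1)
  · rw [show u⁻¹ * u * u = u from by group]; exact mt1
  · exact mul_mem (mul_mem (inv_mem mt1) mt2) mt1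
  · exact mt2
  · rw [show v * (v * u * v⁻¹) * v⁻¹ = (v * v) * u * (v⁻¹ * v⁻¹) from by group, hv2, hv2',
      ← ht12]
    exact mul_mem mt1 mt2
  · rw [show v⁻¹ * u * v = v⁻¹ * u * v from rfl, ← ht12]; exact mul_mem mt1 mt2
  · rw [show v⁻¹ * (v * u * v⁻¹) * v = u from by group]; exact mt1
  · rw [hui, show u * v * u * v⁻¹ = u * (v * u * v⁻¹) from by group]; exact mul_mem mt1 mt2

private lemma case333 (u v : G) (hu : u ^ 3 = 1) (hv : v ^ 3 = 1) (hw : (u * v) ^ 3 = 1) :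
    IsSolvable ↥(Subgroup.closure ({u, v} : Set G)) := by
  rw [show u ^ 3 = u * u * u from by rw [pow_succ, pow_two]] at hu
  rw [show v ^ 3 = v * v * v from by rw [pow_succ, pow_two]] at hv
  rw [show (u * v) ^ 3 = (u * v) * (u * v) * (u * v) from by rw [pow_succ, pow_two],
    show (u * v) * (u * v) * (u * v) = (u * v * u) * (v * u * v) from by group] at hw
  have hu2 : u * u = u⁻¹ := eq_inv_of_mul_eq_one_left hu
  have hu2' : u⁻¹ * u⁻¹ = u := by
    rw [← mul_inv_rev]; exact inv_eq_of_mul_eq_one_right hu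
  have hv2 : v * v = v⁻¹ := eq_inv_of_mul_eq_one_left hv
  have hv2' : v⁻¹ * v⁻¹ = v := by
    rw [← mul_inv_rev]; exact inv_eq_of_mul_eq_one_right hv
  have mu : u ∈ Subgroup.closure ({u, v} : Set G) := subset_closure (by left; rfl)
  have mv : v ∈ Subgroup.closure ({u, v} : Set G) := subset_closure (by right; rfl)
  have mT1 : u⁻¹ * v ∈ Subgroup.closure ({u, v} : Set G) := mul_mem (inv_mem mu) mv
  have mT2 : v * u⁻¹ ∈ Subgroup.closure ({u, v} : Set G) := mul_mem mv (inv_mem mu)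
  have mt1 : u⁻¹ * v ∈ Subgroup.closure ({u⁻¹ * v, v * u⁻¹} : Set G) :=
    subset_closure (by left; rfl)
  have mt2 : v * u⁻¹ ∈ Subgroup.closure ({u⁻¹ * v, v * u⁻¹} : Set G) :=
    subset_closure (by right; rfl)
  have hA : u * v * u = (v * u * v)⁻¹ := eq_inv_of_mul_eq_one_left hw
  have hB : v * u * v = (u * v * u)⁻¹ := eq_inv_of_mul_eq_one_right hw
  have ht : (u⁻¹ * v) * (v * u⁻¹) = v * u * v := by
    calc (u⁻¹ * v) * (v * u⁻¹) = u⁻¹ * (v * v) * u⁻¹ := by group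
      _ = u⁻¹ * v⁻¹ * u⁻¹ := by rw [hv2]
      _ = (u * v * u)⁻¹ := by group
      _ = v * u * v := hB.symm
  have ht' : (v * u⁻¹) * (u⁻¹ * v) = v * u * v := by
    calc (v * u⁻¹) * (u⁻¹ * v) = v * (u⁻¹ * u⁻¹) * v := by group
      _ = v * u * v := by rw [hu2']
  have hx2 : u * (v * u⁻¹) * u⁻¹ = (v * u * v)⁻¹ := by
    calc u * (v * u⁻¹) * u⁻¹ = u * v * (u⁻¹ * u⁻¹) := by group
      _ = u * v * u := by rw [hu2']
      _ = (v * u * v)⁻¹ := hA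
  have hx3 : u⁻¹ * (u⁻¹ * v) * u = (v * u * v)⁻¹ := by
    calc u⁻¹ * (u⁻¹ * v) * u = (u⁻¹ * u⁻¹) * v * u := by group
      _ = u * v * u := by rw [hu2']
      _ = (v * u * v)⁻¹ := hA
  have hx6 : v * (v * u⁻¹) * v⁻¹ = (v * u * v)⁻¹ := by
    calc v * (v * u⁻¹) * v⁻¹ = (v * v) * u⁻¹ * v⁻¹ := by group
      _ = v⁻¹ * u⁻¹ * v⁻¹ := by rw [hv2]
      _ = (v * u * v)⁻¹ := by group
  have hx7 : v⁻¹ * (u⁻¹ * v) * v = (v * u * v)⁻¹ := by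
    calc v⁻¹ * (u⁻¹ * v) * v = v⁻¹ * u⁻¹ * (v * v) := by group
      _ = v⁻¹ * u⁻¹ * v⁻¹ := by rw [hv2]
      _ = (v * u * v)⁻¹ := by group
  refine solvable_helper u v (u⁻¹ * v) (v * u⁻¹) mT1 mT2 (ht.trans ht'.symm)
    ?_ ?_ ?_ ?_ ?_ ?_ ?_ ?_ ?_
  · rw [show u * (u⁻¹ * v) * u⁻¹ = v * u⁻¹ from by group]; exact mt2
  · rw [hx2, ← ht]; exact inv_mem (mul_mem mt1 mt2)
  · rw [hx3, ← ht]; exact inv_mem (mul_mem mt1 mt2)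
  · rw [show u⁻¹ * (v * u⁻¹) * u = u⁻¹ * v from by group]; exact mt1
  · rw [show v * (u⁻¹ * v) * v⁻¹ = v * u⁻¹ from by group]; exact mt2
  · rw [hx6, ← ht]; exact inv_mem (mul_mem mt1 mt2)
  · rw [hx7, ← ht]; exact inv_mem (mul_mem mt1 mt2)
  · rw [show v⁻¹ * (v * u⁻¹) * v = u⁻¹ * v from by group]; exact mt1
  · rw [show u * v * u⁻¹ * v⁻¹ = (u * (v * u⁻¹) * u⁻¹) * (u * v⁻¹) from by group, hx2, ← ht',
      show ((v * u⁻¹) * (u⁻¹ * v))⁻¹ * (u * v⁻¹) = ((v * u⁻¹) * (u⁻¹ * v))⁻¹ * (v * u⁻¹)⁻¹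
        from by group]
    exact mul_mem (inv_mem (mul_mem mt2 mt1)) (inv_mem mt2)

private lemma case332 (u v : G) (hu : u ^ 3 = 1) (hv : v ^ 3 = 1) (hw : (u * v) ^ 2 = 1) :
    IsSolvable ↥(Subgroup.closure ({u, v} : Set G)) := by
  rw [show u ^ 3 = u * u * u from by rw [pow_succ, pow_two]] at hu
  rw [show v ^ 3 = v * v * v from by rw [pow_succ, pow_two]] at hv
  rw [pow_two] at hw
  have hu2 : u * u = u⁻¹ := eq_inv_of_mul_eq_one_left hu
  have hv2 : v * v = v⁻¹ := eq_inv_of_mul_eq_one_left hv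
  have mu : u ∈ Subgroup.closure ({u, v} : Set G) := subset_closure (by left; rfl)
  have mv : v ∈ Subgroup.closure ({u, v} : Set G) := subset_closure (by right; rfl)
  have mT1 : u * v ∈ Subgroup.closure ({u, v} : Set G) := mul_mem mu mv
  have mT2 : v * u ∈ Subgroup.closure ({u, v} : Set G) := mul_mem mv mu
  have mt1 : u * v ∈ Subgroup.closure ({u * v, v * u} : Set G) := subset_closure (by left; rfl)
  have mt2 : v * u ∈ Subgroup.closure ({u * v, v * u} : Set G) := subset_closure (by right; rfl)
  have hww' : (v * u) * (v * u) = 1 := by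
    rw [show (v * u) * (v * u) = u⁻¹ * ((u * v) * (u * v)) * u from by group, hw]; group
  have hA : u * v * u = v⁻¹ := by
    apply eq_inv_of_mul_eq_one_left
    rw [show (u * v * u) * v = (u * v) * (u * v) from by group]; exact hw
  have hB : v * u * v = u⁻¹ := by
    apply eq_inv_of_mul_eq_one_left
    rw [show (v * u * v) * u = (v * u) * (v * u) from by group]; exact hww'
  have htA : (u * v) * (v * u) = u * v⁻¹ * u := by
    calc (u * v) * (v * u) = u * (v * v) * u := by group
      _ = u * v⁻¹ * u := by rw [hv2]
  have htB : (v * u) * (u * v) = v * u⁻¹ * v := by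
    calc (v * u) * (u * v) = v * (u * u) * v := by group
      _ = v * u⁻¹ * v := by rw [hu2]
  have mid : u * v⁻¹ * u = v * u⁻¹ * v := by
    calc u * v⁻¹ * u = u * (u * v * u) * u := by rw [← hA]
      _ = (u * u) * v * (u * u) := by group
      _ = u⁻¹ * v * u⁻¹ := by rw [hu2]
      _ = (v * u * v) * v * (v * u * v) := by rw [← hB]
      _ = v * u * (v * v * v) * u * v := by group
      _ = v * u * (1 : G) * u * v := by rw [hv]
      _ = v * (u * u) * v := by group
      _ = v * u⁻¹ * v := by rw [hu2]
  have hx4 : u⁻¹ * v * u⁻¹ = ((u * v) * (v * u))⁻¹ := by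
    calc u⁻¹ * v * u⁻¹ = (u * v⁻¹ * u)⁻¹ := by group
      _ = ((u * v) * (v * u))⁻¹ := by rw [← htA]
  have hx6 : v⁻¹ * u * v⁻¹ = ((v * u) * (u * v))⁻¹ := by
    calc v⁻¹ * u * v⁻¹ = (v * u⁻¹ * v)⁻¹ := by group
      _ = ((v * u) * (u * v))⁻¹ := by rw [← htB]
  refine solvable_helper u v (u * v) (v * u) mT1 mT2 (htA.trans (mid.trans htB.symm))
    ?_ ?_ ?_ ?_ ?_ ?_ ?_ ?_ ?_
  · rw [show u * (u * v) * u⁻¹ = (u * u) * v * u⁻¹ from by group, hu2, hx4]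
    exact inv_mem (mul_mem mt1 mt2)
  · rw [show u * (v * u) * u⁻¹ = u * v from by group]; exact mt1
  · rw [show u⁻¹ * (u * v) * u = v * u from by group]; exact mt2
  · rw [show u⁻¹ * (v * u) * u = u⁻¹ * v * (u * u) from by group, hu2, hx4]
    exact inv_mem (mul_mem mt1 mt2)
  · rw [show v * (u * v) * v⁻¹ = v * u from by group]; exact mt2
  · rw [show v * (v * u) * v⁻¹ = (v * v) * u * v⁻¹ from by group, hv2, hx6]
    exact inv_mem (mul_mem mt2 mt1)
  · rw [show v⁻¹ * (u * v) * v = v⁻¹ * u * (v * v) from by group, hv2, hx6]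
    exact inv_mem (mul_mem mt2 mt1)
  · rw [show v⁻¹ * (v * u) * v = u * v from by group]; exact mt1
  · rw [show u * v * u⁻¹ * v⁻¹ = (u * v) * (v * u)⁻¹ from by group]
    exact mul_mem mt1 (inv_mem mt2)

private lemma case322 (u v : G) (hu : u ^ 3 = 1) (hv : v ^ 2 = 1) (hw : (u * v) ^ 2 = 1) :
    IsSolvable ↥(Subgroup.closure ({u, v} : Set G)) := by
  have hw' : (v * u) ^ 2 = 1 := by
    rw [show v * u = u⁻¹ * (u * v) * u⁻¹⁻¹ from by group, conj_pow, hw]; group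
  rw [Set.pair_comm]
  exact case232 v u hv hu hw'

private lemma case323 (u v : G) (hu : u ^ 3 = 1) (hv : v ^ 2 = 1) (hw : (u * v) ^ 3 = 1) :
    IsSolvable ↥(Subgroup.closure ({u, v} : Set G)) := by
  have hw' : (v * u) ^ 3 = 1 := by
    rw [show v * u = u⁻¹ * (u * v) * u⁻¹⁻¹ from by group, conj_pow, hw]; group
  rw [Set.pair_comm]
  exact case233 v u hv hu hw'


end Cases



/-- Let `G` be a finite group generated by a conjugacy class `D` of involutions such
that the product of any two elements of `D` has order 1, 2 or 3 (a class of
3-transpositions). Then every `d ∈ D` is a 2-radical element: for all `x, y ∈ G`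
the subgroup generated by `⁅d,x⁆` and `⁅d,y⁆` is solvable. -/
theorem three_transpositions_two_radical {G : Type*} [Group G] [Finite G]
    (D : Set G) (d₀ : G) (hclass : D = {x : G | IsConj d₀ x})
    (hinv : ∀ d ∈ D, orderOf d = 2)
    (hgen : Subgroup.closure D = ⊤)
    (hord : ∀ d ∈ D, ∀ e ∈ D, orderOf (d * e) = 1 ∨ orderOf (d * e) = 2 ∨
      orderOf (d * e) = 3) :
    ∀ d ∈ D, ∀ x y : G,
      IsSolvable (Subgroup.closure ({⁅d, x⁆, ⁅d, y⁆} : Set G)) := by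
  intro d hd x y
  have hDconj : ∀ g a : G, a ∈ D → g * a * g⁻¹ ∈ D := by
    intro g a ha
    rw [hclass] at ha ⊢
    exact ha.trans (isConj_iff.mpr ⟨g, rfl⟩)
  have he : x * d * x⁻¹ ∈ D := hDconj x d hd
  have hf : y * d * y⁻¹ ∈ D := hDconj y d hd
  have sq : ∀ a ∈ D, a * a = 1 := by
    intro a ha
    have h := pow_orderOf_eq_one a
    rw [hinv a ha, pow_two] at h
    exact h
  have hdd := sq d hd
  have hee := sq _ he
  have hdi : d⁻¹ = d := inv_eq_of_mul_eq_one_right hdd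
  have hcx : ⁅d, x⁆ = d * (x * d * x⁻¹) := by
    rw [commutatorElement_def, hdi]; group
  have hcy : ⁅d, y⁆ = d * (y * d * y⁻¹) := by
    rw [commutatorElement_def, hdi]; group
  have hset : ({⁅d, x⁆, ⁅d, y⁆} : Set G) =
      {d * (x * d * x⁻¹), d * (y * d * y⁻¹)} := by rw [hcx, hcy]
  rw [hset]
  have hdf : (d * (x * d * x⁻¹)) * ((x * d * x⁻¹) * (y * d * y⁻¹)) = d * (y * d * y⁻¹) := by
    rw [show (d * (x * d * x⁻¹)) * ((x * d * x⁻¹) * (y * d * y⁻¹))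
        = d * ((x * d * x⁻¹) * (x * d * x⁻¹)) * (y * d * y⁻¹) from by group, hee]
    group
  have hclos : Subgroup.closure ({d * (x * d * x⁻¹), d * (y * d * y⁻¹)} : Set G) =
      Subgroup.closure ({d * (x * d * x⁻¹), (x * d * x⁻¹) * (y * d * y⁻¹)} : Set G) := by
    apply le_antisymm
    · rw [Subgroup.closure_le]
      rintro z (rfl | hz)
      · exact subset_closure (by left; rfl)
      · rw [Set.mem_singleton_iff] at hz
        subst hz
        rw [← hdf]
        exact mul_mem (subset_closure (by left; rfl)) (subset_closure (by right; rfl))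
    · rw [Subgroup.closure_le]
      rintro z (rfl | hz)
      · exact subset_closure (by left; rfl)
      · rw [Set.mem_singleton_iff] at hz
        subst hz
        rw [show (x * d * x⁻¹) * (y * d * y⁻¹)
            = (d * (x * d * x⁻¹))⁻¹ * ((d * (x * d * x⁻¹)) * ((x * d * x⁻¹) * (y * d * y⁻¹)))
            from by group, hdf]
        exact mul_mem (inv_mem (subset_closure (by left; rfl)))
          (subset_closure (by right; rfl))
  rw [hclos]
  have pw : ∀ w : G, orderOf w = 1 ∨ orderOf w = 2 ∨ orderOf w = 3 →
      w ^ 2 = 1 ∨ w ^ 3 = 1 := by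
    rintro w (h | h | h)
    · left; rw [orderOf_eq_one_iff.mp h, one_pow]
    · left; rw [← h]; exact pow_orderOf_eq_one w
    · right; rw [← h]; exact pow_orderOf_eq_one w
  have hu23 := pw _ (hord d hd _ he)
  have hv23 := pw _ (hord _ he _ hf)
  have hw23 : (d * (x * d * x⁻¹) * ((x * d * x⁻¹) * (y * d * y⁻¹))) ^ 2 = 1 ∨
      (d * (x * d * x⁻¹) * ((x * d * x⁻¹) * (y * d * y⁻¹))) ^ 3 = 1 := by
    rw [hdf]
    exact pw _ (hord d hd _ hf)
  rcases hu23 with hu | hu <;> rcases hv23 with hv | hv <;> rcases hw23 with hw | hw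
  · exact case222 _ _ hu hv hw
  · exact case223 _ _ hu hv hw
  · exact case232 _ _ hu hv hw
  · exact case233 _ _ hu hv hw
  · exact case322 _ _ hu hv hw
  · exact case323 _ _ hu hv hw
  · exact case332 _ _ hu hv hw
  · exact case333 _ _ hu hv hw
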